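/- Define f₁ : ℝ² → ℝ by f₁(x) := 2x₁² + x₂² + x₂ + x₁² sin(ln|x₁|) if x₁ ≠ 0, and f₁(x) := x₂² + x₂ if x₁ = 0; set f₂ := −f₁, g₁(x) := −x₂, and Q0 := {x ∈ ℝ² : g₁(x) ≤ 0} = {x ∈ ℝ² : x₂ ≥ 0}. Then x⁰ := (0,0) is a Geoffrion properly efficient solution of the problem of minimizing (f₁, f₂) over Q0. -/
import Mathlib


open Filter Topology Set

noncomputable section

/-- The `C^{1,1}` function `f₁` of Example 4.1. -/
def f1 (x : EuclideanSpace ℝ (Fin 2)) : ℝ :=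
  if x 0 = 0 then (x 1) ^ 2 + x 1
  else 2 * (x 0) ^ 2 + (x 1) ^ 2 + x 1 + (x 0) ^ 2 * Real.sin (Real.log |x 0|)

/-- The objective family `(f₁, f₂)` with `f₂ = −f₁`. -/
def fpair : Fin 2 → EuclideanSpace ℝ (Fin 2) → ℝ :=
  ![f1, fun x => -f1 x]

/-- The constraint `g₁(x) = −x₂`. -/
def g1 (x : EuclideanSpace ℝ (Fin 2)) : ℝ := -(x 1)

/-- The feasible set `Q₀ = {x : g₁(x) ≤ 0}`. -/
def Q0 : Set (EuclideanSpace ℝ (Fin 2)) := {x | g1 x ≤ 0}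

lemma f1_zero : f1 0 = 0 := by
  simp [f1]

lemma fpair_zero (i : Fin 2) : fpair i 0 = 0 := by
  fin_cases i <;> simp [fpair, f1_zero]

/-- Example 4.1: `x⁰ = (0,0)` is a Geoffrion properly efficient solution of the
problem of minimizing `(f₁, f₂)` over `Q₀`. -/
theorem stmt_17 :
    (0 : EuclideanSpace ℝ (Fin 2)) ∈ Q0 ∧
    (¬ ∃ x ∈ Q0, (∀ i : Fin 2, fpair i x ≤ fpair i 0) ∧
        ∃ k : Fin 2, fpair k x < fpair k 0) ∧
    ∃ M > (0 : ℝ), ∀ i : Fin 2, ∀ x ∈ Q0, fpair i x < fpair i 0 →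
      ∃ j : Fin 2, fpair j 0 < fpair j x ∧
        (fpair i 0 - fpair i x) / (fpair j x - fpair j 0) ≤ M := by
  refine ⟨?_, ?_, 1, one_pos, ?_⟩
  · simp [Q0, g1]
  · rintro ⟨x, -, hle, k, hk⟩
    have h0 := hle 0
    have h1 := hle 1
    simp only [fpair_zero] at h0 h1 hk
    have hf : f1 x = 0 := by
      have : -f1 x ≤ 0 := h1
      simp [fpair] at h0 this
      linarith
    fin_cases k <;> simp [fpair, hf] at hk
  · intro i x _ hlt
    simp only [fpair_zero] at hlt ⊢
    fin_cases i
    · refine ⟨1, ?_, ?_⟩ <;> simp [fpair] at hlt ⊢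
      · linarith
      · rw [div_self (by linarith)]
    · refine ⟨0, ?_, ?_⟩ <;> simp [fpair] at hlt ⊢
      · linarith
      · rw [div_le_one (by linarith)]
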